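/- Let ℓ be a prime number and let C be a commutative ring equipped with an algebra structure over the ring ℤ_ℓ of ℓ-adic integers. Assume C is reduced and that the image of ℓ in C is a non-zero-divisor. If an element c ∈ C satisfies f(c) = 0 for every ring homomorphism f from C to every algebraically closed field of characteristic zero, then c = 0. -/

import Mathlib

universe u

/-- An element of a minimal prime which is a non-zero-divisor gives a contradiction. -/
lemma not_mem_minimalPrime_of_nonZeroDivisor {C : Type u} [CommRing C]
    {q : Ideal C} (hq : q ∈ minimalPrimes C) {x : C}
    (hx : x ∈ nonZeroDivisors C) : x ∉ q := by
  intro hxq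
  haveI : q.IsPrime := hq.1.1
  have hnil : IsNilpotent (algebraMap C (Localization q.primeCompl) x) := by
    haveI := Ring.KrullDimLE.of_isLocalization q hq (Localization q.primeCompl)
    rw [Ring.KrullDimLE.isNilpotent_iff_mem_maximalIdeal]
    exact (IsLocalization.AtPrime.to_map_mem_maximal_iff _ q x).mpr hxq
  obtain ⟨n, hn⟩ := hnil
  rw [← map_pow] at hn
  obtain ⟨m, hm⟩ := (IsLocalization.map_eq_zero_iff q.primeCompl _ _).mp hn
  have hm0 : (m : C) = 0 := (mem_nonZeroDivisors_iff_right.mp (pow_mem hx n)) _ hm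
  exact m.2 (hm0 ▸ q.zero_mem)

/-- The quotient of `C` by a minimal prime has characteristic zero. -/
lemma charZero_quotient (ℓ : ℕ) [Fact (Nat.Prime ℓ)] (C : Type u) [CommRing C]
    [Algebra (PadicInt ℓ) C]
    (hℓ : algebraMap (PadicInt ℓ) C (ℓ : PadicInt ℓ) ∈ nonZeroDivisors C)
    {q : Ideal C} (hq : q ∈ minimalPrimes C) :
    CharZero (C ⧸ q) := by
  haveI : q.IsPrime := hq.1.1
  haveI : IsDomain (C ⧸ q) := Ideal.Quotient.isDomain q
  rcases CharP.exists (C ⧸ q) with ⟨p, hp⟩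
  rcases CharP.char_is_prime_or_zero (C ⧸ q) p with hpp | rfl
  · exfalso
    have hp0 : (p : C ⧸ q) = 0 := CharP.cast_eq_zero (C ⧸ q) p
    by_cases hpl : p = ℓ
    · have hmem : algebraMap (PadicInt ℓ) C (ℓ : PadicInt ℓ) ∈ q := by
        rw [map_natCast, ← Ideal.Quotient.eq_zero_iff_mem, map_natCast, ← hpl]
        exact hp0
      exact not_mem_minimalPrime_of_nonZeroDivisor hq hℓ hmem
    · -- p is a unit in ℤ_ℓ, hence its image in C ⧸ q is a unit, contradicting hp0
      have hunit : IsUnit ((p : PadicInt ℓ)) := by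
        rw [PadicInt.isUnit_iff]
        refine le_antisymm (PadicInt.norm_le_one _) ?_
        by_contra hlt
        push_neg at hlt
        have : (ℓ : ℤ) ∣ (p : ℤ) := by
          rw [← PadicInt.norm_int_lt_one_iff_dvd]
          simpa using hlt
        rw [Int.natCast_dvd_natCast] at this
        exact hpl ((Nat.prime_dvd_prime_iff_eq (Fact.out) hpp).mp this).symm
      have : IsUnit ((p : C ⧸ q)) := by
        have := hunit.map ((Ideal.Quotient.mk q).comp (algebraMap (PadicInt ℓ) C))
        simp only [RingHom.comp_apply, map_natCast] at this
        exact this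
      rw [hp0] at this
      exact not_isUnit_zero this
  · exact CharP.charP_to_charZero _

/-- The density-of-characteristic-zero-points argument at the end of the proof of
Theorem 10.4: if `C` is a reduced `ℤ_ℓ`-algebra in which (the image of) `ℓ` is a
non-zero-divisor, then an element of `C` vanishing under every ring homomorphism to
every algebraically closed field of characteristic zero is zero. -/
theorem eq_zero_of_vanishing_at_char_zero_points
    (ℓ : ℕ) [Fact (Nat.Prime ℓ)] (C : Type u) [CommRing C]
    [Algebra (PadicInt ℓ) C] [IsReduced C]
    (hℓ : algebraMap (PadicInt ℓ) C (ℓ : PadicInt ℓ) ∈ nonZeroDivisors C)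
    (c : C)
    (h : ∀ (K : Type u), ∀ (_ : Field K) (_ : IsAlgClosed K) (_ : CharZero K)
      (f : C →+* K), f c = 0) :
    c = 0 := by
  have hnil : c ∈ nilradical C := by
    rw [nilradical_eq_sInf]
    refine Ideal.mem_sInf.mpr fun {p} hp => ?_
    haveI : p.IsPrime := hp
    obtain ⟨q, hq, hqp⟩ := Ideal.exists_minimalPrimes_le (I := ⊥) bot_le (J := p)
    refine hqp ?_
    -- build the field
    haveI : q.IsPrime := hq.1.1
    haveI : IsDomain (C ⧸ q) := Ideal.Quotient.isDomain q
    haveI : CharZero (C ⧸ q) := charZero_quotient ℓ C hℓ hq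
    set F := FractionRing (C ⧸ q)
    haveI : CharZero F :=
      charZero_of_injective_algebraMap (IsFractionRing.injective (C ⧸ q) F)
    set K := AlgebraicClosure F
    haveI : CharZero K :=
      charZero_of_injective_algebraMap (algebraMap F K).injective
    have hf := h K inferInstance inferInstance inferInstance
      (((algebraMap F K).comp (algebraMap (C ⧸ q) F)).comp (Ideal.Quotient.mk q))
    simp only [RingHom.comp_apply] at hf
    have h1 : algebraMap (C ⧸ q) F ((Ideal.Quotient.mk q) c) = 0 :=
      (map_eq_zero_iff _ (algebraMap F K).injective).mp hf
    have h2 : (Ideal.Quotient.mk q) c = 0 :=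
      (map_eq_zero_iff _ (IsFractionRing.injective (C ⧸ q) F)).mp h1
    exact Ideal.Quotient.eq_zero_iff_mem.mp h2
  simpa [nilradical, Ideal.mem_radical_iff] using
    (IsReduced.eq_zero c) (by simpa [mem_nilradical] using hnil)
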